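/- If every Q-copure Baer injective left R-module is quasi-injective, then every Q-copure Baer injective left R-module is injective. -/

import Mathlib

universe u

variable {R : Type u}

/-- A linear map `f : A → B` is `Q`-copure if every module in `Q` is injective
relative to `f`. -/
def IsCopure [Ring R] (Q : ModuleCat.{u} R → Prop) {A B : Type u}
    [AddCommGroup A] [Module R A] [AddCommGroup B] [Module R B] (f : A →ₗ[R] B) : Prop :=
  ∀ M : ModuleCat.{u} R, Q M → ∀ g : A →ₗ[R] M, ∃ h : B →ₗ[R] M, ∀ a : A, h (f a) = g a

/-- A left ideal `I` of `R` is `Q`-copure if every module in `Q` is injective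
relative to the inclusion `I → R`. -/
def CopureIdeal [Ring R] (Q : ModuleCat.{u} R → Prop) (I : Ideal R) : Prop :=
  ∀ M : ModuleCat.{u} R, Q M → ∀ g : I →ₗ[R] M, ∃ h : R →ₗ[R] M, ∀ x : I, h x = g x

/-- `N` is `Q`-copure Baer injective if every homomorphism from a `Q`-copure
left ideal of `R` into `N` extends to `R`. -/
def CopureBaerInjective [Ring R] (Q : ModuleCat.{u} R → Prop) (N : Type*)
    [AddCommGroup N] [Module R N] : Prop :=
  ∀ I : Ideal R, CopureIdeal Q I → ∀ g : I →ₗ[R] N, ∃ h : R →ₗ[R] N, ∀ x : I, h x = g x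

open CategoryTheory

theorem injective_of_quasiInjective [Ring R] (Q : ModuleCat.{u} R → Prop)
    (h : ∀ (M : Type u) [AddCommGroup M] [Module R M], CopureBaerInjective Q M →
      ∀ (N : Submodule R M) (g : N →ₗ[R] M), ∃ f : M →ₗ[R] M, ∀ x : N, f x = g x) :
    ∀ (M : Type u) [AddCommGroup M] [Module R M], CopureBaerInjective Q M →
      Module.Injective R M := by
  intro M _ _ hM
  -- an injective module `J` containing `R`
  set J := Injective.under (ModuleCat.of R R) with hJdef
  have hJ : Module.Injective R J :=
    Module.injective_module_of_injective_object R J (inj := Injective.injective_under _)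
  let ι : R →ₗ[R] J := (Injective.ι (ModuleCat.of R R) : ModuleCat.of R R ⟶ J).hom
  have hι : Function.Injective ι :=
    (ModuleCat.mono_iff_injective (Injective.ι (ModuleCat.of R R))).mp inferInstance
  -- `M × J` is copure Baer injective
  have hP : CopureBaerInjective Q (M × J) := by
    intro I hI g
    obtain ⟨h1, hh1⟩ := hM I hI ((LinearMap.fst R M J).comp g)
    obtain ⟨h2, hh2⟩ := hJ.out I.subtype (Submodule.injective_subtype I)
      ((LinearMap.snd R M J).comp g)
    exact ⟨h1.prod h2, fun x => Prod.ext (hh1 x) (hh2 x)⟩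
  -- quasi-injectivity of `M × J`
  obtain qi := h (M × J) hP
  -- verify Baer's criterion for `M`
  refine Module.Baer.injective ?_
  intro I g
  let K := Submodule.map ι I
  let N := Submodule.map (LinearMap.inr R M J) K
  let e : I ≃ₗ[R] K := Submodule.equivMapOfInjective ι hι I
  let e2 : K ≃ₗ[R] N := Submodule.equivMapOfInjective _ LinearMap.inr_injective K
  let f : K →ₗ[R] M := g ∘ₗ (e.symm : K →ₗ[R] I)
  let g' : N →ₗ[R] M × J := (LinearMap.inl R M J) ∘ₗ f ∘ₗ (e2.symm : N →ₗ[R] K)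
  obtain ⟨φ, hφ⟩ := qi N g'
  refine ⟨(LinearMap.fst R M J) ∘ₗ φ ∘ₗ (LinearMap.inr R M J) ∘ₗ ι, fun x mem => ?_⟩
  have hk : ι x ∈ K := Submodule.mem_map_of_mem mem
  have hn : ((0 : M), ι x) ∈ N := Submodule.mem_map_of_mem hk
  have step1 : φ ((0 : M), ι x) = g' ⟨((0 : M), ι x), hn⟩ := hφ ⟨((0 : M), ι x), hn⟩
  have he2 : e2.symm ⟨((0 : M), ι x), hn⟩ = ⟨ι x, hk⟩ := by
    rw [LinearEquiv.symm_apply_eq]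
    apply Subtype.ext
    simp only [e2]
    exact (Submodule.coe_equivMapOfInjective_apply (LinearMap.inr R M J) LinearMap.inr_injective K ⟨ι x, hk⟩).symm
  have he : e.symm ⟨ι x, hk⟩ = ⟨x, mem⟩ := by
    rw [LinearEquiv.symm_apply_eq]
    apply Subtype.ext
    simp only [e]
    exact (Submodule.coe_equivMapOfInjective_apply ι hι I ⟨x, mem⟩).symm
  simp only [LinearMap.comp_apply, LinearMap.inr_apply, step1]
  show ((g' ⟨((0 : M), ι x), hn⟩).1 : M) = _
  simp only [g', f, LinearMap.comp_apply, LinearEquiv.coe_coe, he2, he, LinearMap.inl_apply]
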